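/- Let φ : ℝ → [0,∞) be a convex function with φ(0) = 0 that is strictly increasing on [0,∞) or strictly decreasing on (-∞,0]. Then for any a, b ∈ ℝ with a ≠ 0, the function Ψ(t) := φ(a·t - b) + φ(-a·t - b) is monotone increasing on (0,∞). If in addition φ is strictly convex, then Ψ is strictly increasing on (0,∞). -/

import Mathlib

open Set

private lemma key_le (φ : ℝ → ℝ) (hconv : ConvexOn ℝ Set.univ φ)
    (b : ℝ) {u v : ℝ} (hu : 0 ≤ u) (huv : u < v) :
    φ (u - b) + φ (-u - b) ≤ φ (v - b) + φ (-v - b) := by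
  have hv : 0 < v := lt_of_le_of_lt hu huv
  set lam := (v - u) / (2 * v) with hlam
  set mu := (v + u) / (2 * v) with hmu
  have hlam0 : 0 ≤ lam := div_nonneg (by linarith) (by linarith)
  have hmu0 : 0 ≤ mu := div_nonneg (by linarith) (by linarith)
  have hsum : lam + mu = 1 := by rw [hlam, hmu, ← add_div, div_eq_one_iff_eq (mul_pos two_pos hv).ne']; ring
  have h1 := hconv.2 (mem_univ (-v - b)) (mem_univ (v - b)) hlam0 hmu0 hsum
  have h2 := hconv.2 (mem_univ (v - b)) (mem_univ (-v - b)) hlam0 hmu0 hsum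
  have e1 : lam • (-v - b) + mu • (v - b) = u - b := by
    simp only [smul_eq_mul, hlam, hmu]; field_simp; ring
  have e2 : lam • (v - b) + mu • (-v - b) = -u - b := by
    simp only [smul_eq_mul, hlam, hmu]; field_simp; ring
  rw [e1] at h1; rw [e2] at h2
  simp only [smul_eq_mul] at h1 h2
  have h3 : lam * φ (-v - b) + mu * φ (v - b) + (lam * φ (v - b) + mu * φ (-v - b))
      = φ (v - b) + φ (-v - b) := by
    linear_combination (φ (-v - b) + φ (v - b)) * hsum
  linarith

private lemma key_lt (φ : ℝ → ℝ) (hconv : StrictConvexOn ℝ Set.univ φ)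
    (b : ℝ) {u v : ℝ} (hu : 0 ≤ u) (huv : u < v) :
    φ (u - b) + φ (-u - b) < φ (v - b) + φ (-v - b) := by
  have hv : 0 < v := lt_of_le_of_lt hu huv
  set lam := (v - u) / (2 * v) with hlam
  set mu := (v + u) / (2 * v) with hmu
  have hlam0 : 0 < lam := div_pos (by linarith) (by linarith)
  have hmu0 : 0 < mu := div_pos (by linarith) (by linarith)
  have hsum : lam + mu = 1 := by rw [hlam, hmu, ← add_div, div_eq_one_iff_eq (mul_pos two_pos hv).ne']; ring
  have hne : (-v - b) ≠ (v - b) := by intro h; exact hv.ne' (by linarith)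
  have h1 := hconv.2 (mem_univ (-v - b)) (mem_univ (v - b)) hne hlam0 hmu0 hsum
  have h2 := hconv.2 (mem_univ (v - b)) (mem_univ (-v - b)) (Ne.symm hne) hlam0 hmu0 hsum
  have e1 : lam • (-v - b) + mu • (v - b) = u - b := by
    simp only [smul_eq_mul, hlam, hmu]; field_simp; ring
  have e2 : lam • (v - b) + mu • (-v - b) = -u - b := by
    simp only [smul_eq_mul, hlam, hmu]; field_simp; ring
  rw [e1] at h1; rw [e2] at h2
  simp only [smul_eq_mul] at h1 h2
  have h3 : lam * φ (-v - b) + mu * φ (v - b) + (lam * φ (v - b) + mu * φ (-v - b))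
      = φ (v - b) + φ (-v - b) := by
    linear_combination (φ (-v - b) + φ (v - b)) * hsum
  linarith

theorem stmt0 (φ : ℝ → ℝ) (hconv : ConvexOn ℝ Set.univ φ)
    (hnonneg : ∀ t, 0 ≤ φ t) (h0 : φ 0 = 0)
    (hmono : StrictMonoOn φ (Set.Ici (0:ℝ)) ∨ StrictAntiOn φ (Set.Iic (0:ℝ)))
    (a b : ℝ) (ha : a ≠ 0) :
    MonotoneOn (fun t => φ (a * t - b) + φ (-a * t - b)) (Set.Ioi (0:ℝ)) ∧
    (StrictConvexOn ℝ Set.univ φ →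
      StrictMonoOn (fun t => φ (a * t - b) + φ (-a * t - b)) (Set.Ioi (0:ℝ))) := by
  have habs : ∀ t : ℝ, φ (a * t - b) + φ (-a * t - b)
      = φ (|a| * t - b) + φ (-(|a| * t) - b) := by
    intro t
    rcases abs_choice a with h | h
    · rw [h]; ring_nf
    · rw [h]; rw [add_comm]; ring_nf
  constructor
  · intro s hs t ht hst
    rcases eq_or_lt_of_le hst with rfl | hlt
    · exact le_rfl
    · simp only [habs]
      have : |a| * s < |a| * t := by
        have : 0 < |a| := abs_pos.mpr ha
        nlinarith
      have hu : 0 ≤ |a| * s := mul_nonneg (abs_nonneg a) (le_of_lt hs)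
      have := key_le φ hconv b hu this
      simpa [sub_eq_add_neg] using this
  · intro hstrict s hs t ht hlt
    simp only [habs]
    have : |a| * s < |a| * t := by
      have : 0 < |a| := abs_pos.mpr ha
      nlinarith
    have hu : 0 ≤ |a| * s := mul_nonneg (abs_nonneg a) (le_of_lt hs)
    have := key_lt φ hstrict b hu this
    simpa [sub_eq_add_neg] using this
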